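/- For a finite metric space X with m ≥ 2 points, and 2 ≤ n ≤ m, one has αₙ(X) = σ_{n−1}(X): the maximal possible minimal inter-part distance over partitions into n parts equals the (n−1)-st largest edge length of a minimal spanning tree on X. -/

import Mathlib

/-- The distance between two subsets of a metric space. -/
noncomputable def setDist {X : Type} [MetricSpace X] (A B : Set X) : ℝ :=
  sInf {d | ∃ a ∈ A, ∃ b ∈ B, dist a b = d}

/-- The value `α(D)` of the partition of `X` into the fibers of `f : X → Fin n`:
the infimum of the distances between distinct parts. -/
noncomputable def partAlpha {X : Type} [MetricSpace X] {n : ℕ} (f : X → Fin n) : ℝ :=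
  sInf {d | ∃ i j : Fin n, i ≠ j ∧ d = setDist (f ⁻¹' {i}) (f ⁻¹' {j})}

/-- `αₙ(X)`: the supremum of `α(D)` over all partitions `D` of `X` into `n`
nonempty parts (encoded as surjections `X → Fin n`). -/
noncomputable def alphaN (X : Type) [MetricSpace X] (n : ℕ) : ℝ :=
  sSup {a | ∃ f : X → Fin n, Function.Surjective f ∧ a = partAlpha f}


/-- The multiset of edge lengths of a graph `G` on a finite metric space `V`. -/
noncomputable def edgeLengths {V : Type} [MetricSpace V] [Fintype V] (G : SimpleGraph V) :
    Multiset ℝ :=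
  (G.edgeSet.toFinite.toFinset).val.map
    (Sym2.lift ⟨fun x y => dist x y, fun _ _ => dist_comm _ _⟩)

/-- The length of a graph `G` on a finite metric space: the sum of the lengths of its edges. -/
noncomputable def graphLength {V : Type} [MetricSpace V] [Fintype V] (G : SimpleGraph V) : ℝ :=
  (edgeLengths G).sum

/-- `G` is a minimal spanning tree on the finite metric space `V`: a tree with vertex set `V`
whose length is minimal among all such trees. -/
def IsMST {V : Type} [MetricSpace V] [Fintype V] (G : SimpleGraph V) : Prop :=
  G.IsTree ∧ ∀ H : SimpleGraph V, H.IsTree → graphLength G ≤ graphLength H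

open SimpleGraph Function

section Aux

/-! ### Auxiliary list lemmas -/

variable {p : ℝ → Prop} [DecidablePred p]

lemma aux_sorted_get_of_filter (hp : ∀ x y : ℝ, y ≤ x → p y → p x) :
    ∀ (L : List ℝ), L.Pairwise (· ≥ ·) → ∀ (k : ℕ) (hk : k < L.length),
      k + 1 ≤ (L.filter (fun x => decide (p x))).length → p (L.get ⟨k, hk⟩) := by
  intro L
  induction L with
  | nil => intro _ k hk; simp at hk
  | cons a tl ih =>
    intro hs k hk hlen
    have hs' : tl.Pairwise (· ≥ ·) := hs.of_cons
    have ha : ∀ x ∈ tl, x ≤ a := fun x hx => List.rel_of_pairwise_cons hs hx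
    by_cases hpa : p a
    · cases k with
      | zero => simpa using hpa
      | succ k =>
        have : (a :: tl).filter (fun x => decide (p x)) =
            a :: tl.filter (fun x => decide (p x)) := by
          simp [List.filter_cons, hpa]
        rw [this] at hlen
        simp only [List.length_cons] at hlen
        have hk' : k < tl.length := by simpa using hk
        have := ih hs' k hk' (by omega)
        simpa using this
    · exfalso
      have : (a :: tl).filter (fun x => decide (p x)) = [] := by
        apply List.filter_eq_nil_iff.2
        intro x hx
        simp only [decide_eq_true_eq]
        rcases List.mem_cons.1 hx with rfl | hx
        · exact hpa
        · exact fun hpx => hpa (hp a x (ha x hx) hpx)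
      rw [this] at hlen
      simp at hlen

lemma aux_filter_of_sorted_get (hp : ∀ x y : ℝ, y ≤ x → p y → p x) :
    ∀ (L : List ℝ), L.Pairwise (· ≥ ·) → ∀ (k : ℕ) (hk : k < L.length),
      p (L.get ⟨k, hk⟩) → k + 1 ≤ (L.filter (fun x => decide (p x))).length := by
  intro L
  induction L with
  | nil => intro _ k hk; simp at hk
  | cons a tl ih =>
    intro hs k hk hpk
    have hs' : tl.Pairwise (· ≥ ·) := hs.of_cons
    have ha : ∀ x ∈ tl, x ≤ a := fun x hx => List.rel_of_pairwise_cons hs hx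
    have hpa : p a := by
      cases k with
      | zero => simpa using hpk
      | succ k =>
        have hk' : k < tl.length := by simpa using hk
        have hmem : tl.get ⟨k, hk'⟩ ∈ tl := List.get_mem _ _
        exact hp a _ (ha _ hmem) (by simpa using hpk)
    have hfil : (a :: tl).filter (fun x => decide (p x)) =
        a :: tl.filter (fun x => decide (p x)) := by
      simp [List.filter_cons, hpa]
    rw [hfil]
    cases k with
    | zero => simp
    | succ k =>
      have hk' : k < tl.length := by simpa using hk
      have := ih hs' k hk' (by simpa using hpk)
      simp only [List.length_cons]
      omega

/-! ### Walk splitting when deleting one edge -/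

lemma aux_walk_split {V : Type} {G : SimpleGraph V} (u v : V) {x y : V} (w : G.Walk x y) :
    (G.deleteEdges {s(u,v)}).Reachable x y ∨
    ((G.deleteEdges {s(u,v)}).Reachable x u ∧ (G.deleteEdges {s(u,v)}).Reachable y v) ∨
    ((G.deleteEdges {s(u,v)}).Reachable x v ∧ (G.deleteEdges {s(u,v)}).Reachable y u) := by
  induction w with
  | nil => exact Or.inl (Reachable.refl _)
  | @cons x z y h p ih =>
    by_cases he : s(x, z) = s(u, v)
    · rcases Sym2.eq_iff.1 he with ⟨rfl, rfl⟩ | ⟨rfl, rfl⟩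
      · -- x = u, z = v
        rcases ih with h1 | ⟨h1, h2⟩ | ⟨h1, h2⟩
        · exact Or.inr (Or.inl ⟨Reachable.refl _, h1.symm⟩)
        · exact Or.inr (Or.inl ⟨Reachable.refl _, h2⟩)
        · exact Or.inl h2.symm
      · -- x = v, z = u
        rcases ih with h1 | ⟨h1, h2⟩ | ⟨h1, h2⟩
        · exact Or.inr (Or.inr ⟨Reachable.refl _, h1.symm⟩)
        · exact Or.inl h2.symm
        · exact Or.inr (Or.inr ⟨Reachable.refl _, h2⟩)
    · have hadj : (G.deleteEdges {s(u,v)}).Adj x z := by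
        simp only [deleteEdges_adj, Set.mem_singleton_iff]
        exact ⟨h, he⟩
      rcases ih with h1 | ⟨h1, h2⟩ | ⟨h1, h2⟩
      · exact Or.inl (hadj.reachable.trans h1)
      · exact Or.inr (Or.inl ⟨hadj.reachable.trans h1, h2⟩)
      · exact Or.inr (Or.inr ⟨hadj.reachable.trans h1, h2⟩)

/-! ### Component counting -/

lemma aux_card_le_cc_add_edges {V : Type} [Fintype V] :
    ∀ (k : ℕ) (G : SimpleGraph V), (G.edgeSet.toFinite.toFinset).card = k →
      Fintype.card V ≤ Nat.card G.ConnectedComponent + k := by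
  classical
  intro k
  induction k with
  | zero =>
    intro G hG
    have hE : G.edgeSet = ∅ :=
      Set.Finite.toFinset_eq_empty.1 (Finset.card_eq_zero.1 hG)
    have hinj : Function.Injective G.connectedComponentMk := by
      intro x y hxy
      obtain ⟨w⟩ := ConnectedComponent.eq.1 hxy
      cases w with
      | nil => rfl
      | cons h _ =>
        exfalso
        have : s(x, _) ∈ G.edgeSet := h
        rw [hE] at this
        exact this
    have := Nat.card_le_card_of_injective _ hinj
    simpa [Nat.card_eq_fintype_card] using this
  | succ k ih =>
    intro G hG
    have hne : (G.edgeSet.toFinite.toFinset).Nonempty := by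
      rw [← Finset.card_pos, hG]; omega
    obtain ⟨e, he⟩ := hne
    have heE : e ∈ G.edgeSet := by simpa using he
    obtain ⟨u, v, rfl⟩ : ∃ u v, e = s(u,v) := Sym2.ind (fun u v => ⟨u, v, rfl⟩) e
    set G0 := G.deleteEdges {s(u,v)} with hG0
    have hfins : (G0.edgeSet.toFinite.toFinset) =
        (G.edgeSet.toFinite.toFinset).erase s(u,v) := by
      ext e'
      simp only [Set.Finite.mem_toFinset, Finset.mem_erase, hG0, edgeSet_deleteEdges,
        Set.mem_diff, Set.mem_singleton_iff]
      tauto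
    have hcard0 : (G0.edgeSet.toFinite.toFinset).card = k := by
      rw [hfins, Finset.card_erase_of_mem he, hG]
      omega
    have IH := ih G0 hcard0
    -- Nat.card CC(G0) ≤ Nat.card CC(G) + 1
    have hle : Nat.card G0.ConnectedComponent ≤ Nat.card G.ConnectedComponent + 1 := by
      have hfin0 : Finite G0.ConnectedComponent :=
        Finite.of_surjective _ (Quot.mk_surjective)
      have hfinG : Finite G.ConnectedComponent :=
        Finite.of_surjective _ (Quot.mk_surjective)
      set φ : G0.ConnectedComponent → G.ConnectedComponent :=
        ConnectedComponent.map (Hom.ofLE (deleteEdges_le _)) with hφ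
      set ψ : G0.ConnectedComponent → Option G.ConnectedComponent :=
        fun c => if c = G0.connectedComponentMk v then none else some (φ c) with hψ
      have hinj : Function.Injective ψ := by
        intro c1 c2 h12
        by_cases h1 : c1 = G0.connectedComponentMk v <;>
          by_cases h2 : c2 = G0.connectedComponentMk v
        · rw [h1, h2]
        · simp only [hψ, if_pos h1, if_neg h2] at h12
          exact absurd h12 (by simp)
        · simp only [hψ, if_neg h1, if_pos h2] at h12
          exact absurd h12 (by simp)
        · simp only [hψ, if_neg h1, if_neg h2, Option.some.injEq] at h12
          obtain ⟨x, rfl⟩ := Quot.exists_rep c1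
          obtain ⟨y, rfl⟩ := Quot.exists_rep c2
          have hxy : G.Reachable x y := by
            have h12' : φ (G0.connectedComponentMk x) = φ (G0.connectedComponentMk y) := h12
            rw [hφ] at h12'
            simp only [ConnectedComponent.map_mk, Hom.ofLE_apply] at h12'
            exact ConnectedComponent.eq.1 h12'
          obtain ⟨w⟩ := hxy
          rcases aux_walk_split u v w with hr | ⟨hr1, hr2⟩ | ⟨hr1, hr2⟩
          · exact ConnectedComponent.eq.2 hr
          · exact absurd (ConnectedComponent.eq.2 hr2) h2
          · exact absurd (ConnectedComponent.eq.2 hr1) h1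
      have hcle := Nat.card_le_card_of_injective ψ hinj
      have hopt : Nat.card (Option G.ConnectedComponent) = Nat.card G.ConnectedComponent + 1 := by
        letI : Fintype G.ConnectedComponent := Fintype.ofFinite _
        simp [Nat.card_eq_fintype_card]
      rw [hopt] at hcle
      exact hcle
    omega

/-! ### Crossing edges for connected graphs -/

lemma aux_walk_crossing {V β : Type} {G : SimpleGraph V} {f : V → β} :
    ∀ {x y : V}, G.Walk x y → f x ≠ f y → ∃ a b, G.Adj a b ∧ f a ≠ f b := by
  intro x y w
  induction w with
  | nil => intro h; exact absurd rfl h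
  | @cons x z y h p ih =>
    intro hxy
    by_cases hxz : f x = f z
    · obtain ⟨a, b, hab⟩ := ih (fun hzy => hxy (hxz.trans hzy))
      exact ⟨a, b, hab⟩
    · exact ⟨x, z, h, hxz⟩

lemma aux_exists_crossing {V β : Type} [Fintype V] [Nonempty V] [DecidableEq β] :
    ∀ (k : ℕ) (G : SimpleGraph V), G.Preconnected → ∀ (f : V → β),
      (Finset.image f Finset.univ).card = k →
      ∃ S : Finset (Sym2 V), ↑S ⊆ G.edgeSet ∧ S.card + 1 = k ∧
        ∀ e ∈ S, ¬ (e.map f).IsDiag := by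
  classical
  intro k
  induction k with
  | zero =>
    intro G _ f hf
    exfalso
    have : (Finset.image f Finset.univ).Nonempty :=
      (Finset.univ_nonempty).image f
    rw [← Finset.card_pos, hf] at this
    omega
  | succ k ih =>
    intro G hG f hf
    rcases Nat.eq_zero_or_pos k with rfl | hk
    · exact ⟨∅, by simp, by simp, by simp⟩
    · -- at least two values: find a crossing edge
      have h2 : 1 < (Finset.image f Finset.univ).card := by omega
      obtain ⟨c1, hc1, c2, hc2, hcc⟩ := Finset.one_lt_card.1 h2
      obtain ⟨x, _, rfl⟩ := Finset.mem_image.1 hc1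
      obtain ⟨y, _, rfl⟩ := Finset.mem_image.1 hc2
      obtain ⟨w⟩ := hG x y
      obtain ⟨a, b, hab, hfab⟩ := aux_walk_crossing w hcc
      set f' : V → β := fun t => if f t = f b then f a else f t with hf'
      have himg : Finset.image f' Finset.univ = (Finset.image f Finset.univ).erase (f b) := by
        ext c
        simp only [Finset.mem_image, Finset.mem_erase, Finset.mem_univ, true_and, hf']
        constructor
        · rintro ⟨t, rfl⟩
          by_cases ht : f t = f b
          · rw [if_pos ht]
            exact ⟨hfab, a, rfl⟩
          · rw [if_neg ht]
            exact ⟨ht, t, rfl⟩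
        · rintro ⟨hc, t, rfl⟩
          exact ⟨t, if_neg hc⟩
      have hcard' : (Finset.image f' Finset.univ).card = k := by
        rw [himg, Finset.card_erase_of_mem (Finset.mem_image.2 ⟨b, Finset.mem_univ _, rfl⟩), hf]
        omega
      obtain ⟨S', hS'sub, hS'card, hS'cross⟩ := ih G hG f' hcard'
      have habS' : s(a, b) ∉ S' := by
        intro hmem
        have := hS'cross _ hmem
        apply this
        simp only [Sym2.map_pair_eq, Sym2.mk_isDiag_iff, hf']
        simp [hfab]
      refine ⟨insert s(a,b) S', ?_, ?_, ?_⟩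
      · intro e hem
        simp only [Finset.coe_insert, Set.mem_insert_iff] at hem
        rcases hem with rfl | hem
        · exact hab
        · exact hS'sub hem
      · rw [Finset.card_insert_of_notMem habS']
        omega
      · intro e hem
        rcases Finset.mem_insert.1 hem with rfl | hem
        · simp only [Sym2.map_pair_eq, Sym2.mk_isDiag_iff]
          exact hfab
        · -- f'-crossing implies f-crossing
          intro hdiag
          apply hS'cross e hem
          obtain ⟨p, q, rfl⟩ : ∃ p q, e = s(p,q) := Sym2.ind (fun p q => ⟨p, q, rfl⟩) e
          simp only [Sym2.map_pair_eq, Sym2.mk_isDiag_iff] at hdiag ⊢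
          simp [hf', hdiag]

/-! ### setDist and partAlpha basics -/

variable {X : Type} [MetricSpace X] [Fintype X]

lemma aux_setDist_le {A B : Set X} {a b : X} (ha : a ∈ A) (hb : b ∈ B) :
    setDist A B ≤ dist a b := by
  apply csInf_le
  · apply Set.Finite.bddBelow
    apply Set.Finite.subset (Set.finite_range (fun p : X × X => dist p.1 p.2))
    rintro d ⟨x, _, y, _, rfl⟩
    exact ⟨(x, y), rfl⟩
  · exact ⟨a, ha, b, hb, rfl⟩

lemma aux_le_setDist {A B : Set X} {c : ℝ} (hA : A.Nonempty) (hB : B.Nonempty)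
    (h : ∀ a ∈ A, ∀ b ∈ B, c ≤ dist a b) : c ≤ setDist A B := by
  apply le_csInf
  · obtain ⟨a, ha⟩ := hA; obtain ⟨b, hb⟩ := hB
    exact ⟨dist a b, a, ha, b, hb, rfl⟩
  · rintro d ⟨a, ha, b, hb, rfl⟩
    exact h a ha b hb

lemma aux_partAlpha_le {n : ℕ} {f : X → Fin n} {i j : Fin n} (hij : i ≠ j) :
    partAlpha f ≤ setDist (f ⁻¹' {i}) (f ⁻¹' {j}) := by
  apply csInf_le
  · apply Set.Finite.bddBelow
    apply Set.Finite.subset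
      (Set.finite_range (fun p : Fin n × Fin n => setDist (f ⁻¹' {p.1}) (f ⁻¹' {p.2})))
    rintro d ⟨i, j, _, rfl⟩
    exact ⟨(i, j), rfl⟩
  · exact ⟨i, j, hij, rfl⟩

lemma aux_le_partAlpha {n : ℕ} {f : X → Fin n} {c : ℝ} (hn : 2 ≤ n)
    (h : ∀ i j : Fin n, i ≠ j → c ≤ setDist (f ⁻¹' {i}) (f ⁻¹' {j})) : c ≤ partAlpha f := by
  apply le_csInf
  · refine ⟨setDist (f ⁻¹' {⟨0, by omega⟩}) (f ⁻¹' {⟨1, by omega⟩}), ⟨0, by omega⟩, ⟨1, by omega⟩,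
      ?_, rfl⟩
    intro hcon
    have := congrArg Fin.val hcon
    simp at this
  · rintro d ⟨i, j, hij, rfl⟩
    exact h i j hij

lemma aux_exists_surj {α β : Type} [Finite α] [Fintype β] [Nonempty β]
    (h : Fintype.card β ≤ Nat.card α) : ∃ g : α → β, Surjective g := by
  classical
  letI : Fintype α := Fintype.ofFinite α
  rw [Nat.card_eq_fintype_card] at h
  obtain ⟨ι⟩ := Function.Embedding.nonempty_of_card_le h
  refine ⟨fun a => (Function.partialInv ι a).getD (Classical.arbitrary β), fun b => ⟨ι b, ?_⟩⟩
  show (Function.partialInv ι (ι b)).getD _ = b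
  rw [Function.partialInv_left ι.injective]
  rfl

end Aux

/-! ### Edge lengths -/

noncomputable def elen {V : Type} [MetricSpace V] : Sym2 V → ℝ :=
  Sym2.lift ⟨fun x y => dist x y, fun _ _ => dist_comm _ _⟩

@[simp] lemma elen_mk {V : Type} [MetricSpace V] (x y : V) : elen s(x, y) = dist x y := rfl

lemma edgeLengths_eq {V : Type} [MetricSpace V] [Fintype V] (G : SimpleGraph V) :
    edgeLengths G = (G.edgeSet.toFinite.toFinset).val.map elen := rfl

lemma graphLength_eq {V : Type} [MetricSpace V] [Fintype V] (G : SimpleGraph V) :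
    graphLength G = ∑ e ∈ G.edgeSet.toFinite.toFinset, elen e := rfl

/-! ### The MST exchange argument -/

lemma aux_swap {V : Type} [MetricSpace V] [Fintype V] {T : SimpleGraph V} (hT : IsMST T)
    {u v a b : V} (huv : T.Adj u v) (hTab : ¬ T.Adj a b) (hab : a ≠ b)
    (hra : (T.deleteEdges {s(u,v)}).Reachable a u)
    (hrb : (T.deleteEdges {s(u,v)}).Reachable b v)
    (hlt : dist a b < dist u v) : False := by
  classical
  set G0 := T.deleteEdges {s(u,v)} with hG0
  have hbridge : ¬ G0.Reachable u v := by
    have hb : T.IsBridge s(u,v) :=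
      (isAcyclic_iff_forall_adj_isBridge.1 hT.1.IsAcyclic) huv
    exact isBridge_iff.1 hb
  have hG0ab : ¬ G0.Reachable a b := fun h => hbridge (hra.symm.trans (h.trans hrb))
  set E' : Set (Sym2 V) := (T.edgeSet \ {s(u,v)}) ∪ {s(a,b)} with hE'
  set T' := SimpleGraph.fromEdgeSet E' with hT'def
  have hnd : ∀ e ∈ E', ¬ e.IsDiag := by
    rintro e (⟨he, -⟩ | he) hd
    · exact T.not_isDiag_of_mem_edgeSet he hd
    · rw [Set.mem_singleton_iff] at he
      subst he
      rw [Sym2.mk_isDiag_iff] at hd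
      exact hab hd
  have hT'edge : T'.edgeSet = E' := by
    rw [hT'def, edgeSet_fromEdgeSet]
    ext e
    simp only [Set.mem_diff, Set.mem_setOf_eq, and_iff_left_iff_imp]
    exact fun he => hnd e he
  have hG0T' : G0 ≤ T' := by
    intro x y hxy
    rw [hG0, deleteEdges_adj] at hxy
    rw [hT'def]
    exact (fromEdgeSet_adj _).2 ⟨Or.inl ⟨(mem_edgeSet _).2 hxy.1, hxy.2⟩, hxy.1.ne⟩
  have hT'ab : T'.Adj a b := by
    rw [hT'def]
    exact (fromEdgeSet_adj _).2 ⟨Or.inr rfl, hab⟩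
  have hT'conn : T'.Connected := by
    rw [connected_iff]
    refine ⟨?_, ⟨a⟩⟩
    have hback : ∀ x, T'.Reachable x a := by
      intro x
      obtain ⟨w⟩ := hT.1.isConnected.preconnected x a
      rcases aux_walk_split u v w with hr | ⟨hr1, hr2⟩ | ⟨hr1, hr2⟩
      · exact hr.mono hG0T'
      · exact (hr1.trans hra.symm).mono hG0T'
      · exact (((hr1.trans hrb.symm).mono hG0T').trans hT'ab.symm.reachable)
    intro x y
    exact (hback x).trans (hback y).symm
  have hT'del : T'.deleteEdges {s(a,b)} ≤ G0 := by
    intro x y hxy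
    rw [deleteEdges_adj] at hxy
    obtain ⟨hadj, hne⟩ := hxy
    rw [hT'def, fromEdgeSet_adj] at hadj
    rcases hadj.1 with hmem | hmem
    · rw [hG0, deleteEdges_adj]
      exact ⟨(mem_edgeSet _).1 hmem.1, hmem.2⟩
    · exact absurd hmem hne
  have hbridge' : T'.IsBridge s(a,b) := by
    rw [isBridge_iff]
    exact fun hreach => hG0ab (Reachable.mono hT'del hreach)
  have hT'acyc : T'.IsAcyclic := by
    intro x cyc hc
    have hnotab : s(a,b) ∉ cyc.edges :=
      (isBridge_iff_forall_cycle_notMem hT'ab).1 hbridge' cyc hc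
    have hedges : ∀ e ∈ cyc.edges, e ∈ T.edgeSet := by
      intro e hec
      have heT' : e ∈ T'.edgeSet := cyc.edges_subset_edgeSet hec
      rw [hT'edge, hE'] at heT'
      rcases heT' with ⟨he, -⟩ | he
      · exact he
      · rw [Set.mem_singleton_iff] at he
        exact absurd (he ▸ hec) hnotab
    exact hT.1.IsAcyclic (cyc.transfer T hedges) (hc.transfer hedges)
  have hT'tree : T'.IsTree := ⟨hT'conn, hT'acyc⟩
  -- length comparison
  have habT : s(a,b) ∉ T.edgeSet := fun h => hTab ((mem_edgeSet _).1 h)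
  have hfin' : T'.edgeSet.toFinite.toFinset
      = insert s(a,b) ((T.edgeSet.toFinite.toFinset).erase s(u,v)) := by
    ext e
    simp only [Set.Finite.mem_toFinset, Finset.mem_insert, Finset.mem_erase,
      Set.Finite.mem_toFinset, hT'edge, hE', Set.mem_union, Set.mem_diff,
      Set.mem_singleton_iff]
    tauto
  have hsum' : graphLength T' = dist a b + (graphLength T - dist u v) := by
    rw [graphLength_eq, graphLength_eq, hfin', Finset.sum_insert ?hni]
    case hni =>
      simp only [Finset.mem_erase, Set.Finite.mem_toFinset]
      exact fun h => habT h.2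
    have h3 := Finset.sum_erase_add (T.edgeSet.toFinite.toFinset) elen
      (a := s(u,v)) (by simpa [Set.Finite.mem_toFinset] using (mem_edgeSet _).2 huv)
    have he1 : elen s(a,b) = dist a b := elen_mk a b
    have he2 : elen s(u,v) = dist u v := elen_mk u v
    rw [he1]
    rw [he2] at h3
    linarith
  have hle := hT.2 T' hT'tree
  linarith

/-- For a finite metric space `X` with `m ≥ 2` points, `2 ≤ n ≤ m`, and mst-spectrum
`σ₁ ≥ … ≥ σ_{m−1}`, one has `αₙ(X) = σ_{n−1}`. -/
theorem alphaN_eq_mst_spectrum (X : Type) [MetricSpace X] [Fintype X] [Nonempty X]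
    (hm : 2 ≤ Fintype.card X) (T : SimpleGraph X) (hT : IsMST T) (σ : ℕ → ℝ)
    (hσ : (edgeLengths T).sort (· ≥ ·) =
      (List.range (Fintype.card X - 1)).map (fun i => σ (i + 1)))
    (n : ℕ) (hn2 : 2 ≤ n) (hn : n ≤ Fintype.card X) :
    alphaN X n = σ (n - 1) := by
  classical
  set m := Fintype.card X with hmdef
  set L : List ℝ := (edgeLengths T).sort (· ≥ ·) with hLdef
  have hLsorted : L.Pairwise (· ≥ ·) := Multiset.pairwise_sort _ _
  have hLlen : L.length = m - 1 := by rw [hσ]; simp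
  have hkn : n - 2 < L.length := by omega
  set c := σ (n - 1) with hcdef
  have hcL : L.get ⟨n - 2, hkn⟩ = c := by
    have h := List.get_of_eq hσ ⟨n - 2, hkn⟩
    rw [h]
    simp only [List.get_eq_getElem, List.getElem_map, List.getElem_range]
    rw [hcdef]
    congr 1
    omega
  have hmulcard : Multiset.card (edgeLengths T) = m - 1 := by
    have h := Multiset.length_sort (α := ℝ) (· ≥ ·) (s := edgeLengths T)
    rw [← h]
    exact hLlen
  have hedgecard : (T.edgeSet.toFinite.toFinset).card = m - 1 := by
    rw [edgeLengths_eq] at hmulcard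
    simpa using hmulcard
  have hfilterL : ∀ (p : ℝ → Prop) [DecidablePred p],
      (L.filter (fun x => decide (p x))).length = Multiset.card ((edgeLengths T).filter p) := by
    intro p hp
    conv_rhs => rw [← Multiset.sort_eq (edgeLengths T) (· ≥ ·)]
    rw [Multiset.filter_coe, Multiset.coe_card]
  -- Upper bound
  have hub : ∀ f : X → Fin n, Surjective f → partAlpha f ≤ c := by
    intro f hf
    obtain ⟨S, hSsub, hScard, hScross⟩ := aux_exists_crossing n T
      hT.1.isConnected.preconnected f
      (by rw [Finset.image_univ_of_surjective hf, Finset.card_univ, Fintype.card_fin])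
    have hSle : ∀ e ∈ S, partAlpha f ≤ elen e := by
      intro e heS
      obtain ⟨x, y, rfl⟩ : ∃ x y, e = s(x,y) := Sym2.ind (fun x y => ⟨x, y, rfl⟩) e
      have hfxy : f x ≠ f y := by
        have h := hScross _ heS
        simpa [Sym2.map_pair_eq, Sym2.mk_isDiag_iff] using h
      have h1 : partAlpha f ≤ setDist (f ⁻¹' {f x}) (f ⁻¹' {f y}) := aux_partAlpha_le hfxy
      have h2 : setDist (f ⁻¹' {f x}) (f ⁻¹' {f y}) ≤ dist x y := aux_setDist_le rfl rfl
      rw [elen_mk]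
      exact h1.trans h2
    set p : ℝ → Prop := fun x => partAlpha f ≤ x with hpdef
    have hfS : Multiset.filter p (Multiset.map elen S.val) = Multiset.map elen S.val := by
      rw [Multiset.filter_eq_self]
      rintro x hx
      obtain ⟨e, he, rfl⟩ := Multiset.mem_map.1 hx
      exact hSle e he
    have hmle : Multiset.map elen S.val ≤ edgeLengths T := by
      rw [edgeLengths_eq]
      apply Multiset.map_le_map
      rw [Finset.val_le_iff]
      intro e he
      rw [Set.Finite.mem_toFinset]
      exact hSsub he
    have hcount : n - 1 ≤ Multiset.card ((edgeLengths T).filter p) := by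
      have h := Multiset.card_le_card (Multiset.filter_le_filter p hmle)
      rw [hfS] at h
      simp only [Multiset.card_map] at h
      have hv : Multiset.card S.val = S.card := rfl
      omega
    have hmono : ∀ x y : ℝ, y ≤ x → p y → p x := fun x y hxy hpy => le_trans hpy hxy
    have h := aux_sorted_get_of_filter hmono L hLsorted (n-2) hkn
      (by rw [hfilterL p]; omega)
    rw [hcL] at h
    exact h
  -- Lower bound
  have hlb : ∃ f : X → Fin n, Surjective f ∧ c ≤ partAlpha f := by
    set pge : ℝ → Prop := fun x => c ≤ x with hpge
    set pgt : ℝ → Prop := fun x => c < x with hpgt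
    have hmge : ∀ x y : ℝ, y ≤ x → pge y → pge x := fun x y h1 h2 => le_trans h2 h1
    have hmgt : ∀ x y : ℝ, y ≤ x → pgt y → pgt x := fun x y h1 h2 => lt_of_lt_of_le h2 h1
    have hA_le : Multiset.card ((edgeLengths T).filter pgt) ≤ n - 2 := by
      by_contra hcon
      push_neg at hcon
      have h := aux_sorted_get_of_filter hmgt L hLsorted (n-2) hkn
        (by rw [hfilterL pgt]; omega)
      rw [hcL] at h
      exact lt_irrefl c h
    have ht_ge : n - 1 ≤ Multiset.card ((edgeLengths T).filter pge) := by
      have h := aux_filter_of_sorted_get hmge L hLsorted (n-2) hkn (by rw [hcL])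
      rw [hfilterL pge] at h
      omega
    set F := T.edgeSet.toFinite.toFinset with hF
    have hfiltercard : ∀ (p : ℝ → Prop) [DecidablePred p],
        Multiset.card ((edgeLengths T).filter p) = (F.filter (fun e => p (elen e))).card := by
      intro p _
      rw [edgeLengths_eq, Multiset.filter_map, Multiset.card_map]
      rw [Finset.card_def, Finset.filter_val]
      exact congrArg _ (Multiset.filter_congr (fun x _ => Iff.rfl))
    have hAcard : (F.filter (fun e => pgt (elen e))).card ≤ n - 1 := by
      rw [← hfiltercard pgt]
      omega
    have htcard : n - 1 ≤ (F.filter (fun e => pge (elen e))).card := by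
      rw [← hfiltercard pge]
      exact ht_ge
    have hsub : F.filter (fun e => pgt (elen e)) ⊆ F.filter (fun e => pge (elen e)) :=
      Finset.monotone_filter_right F (fun e _ he => le_of_lt he)
    obtain ⟨S, hS1, hS2, hS3⟩ := Finset.exists_subsuperset_card_eq hsub hAcard htcard
    have hSF : S ⊆ F := hS2.trans (Finset.filter_subset _ _)
    have hSge : ∀ e ∈ S, c ≤ elen e := fun e he => (Finset.mem_filter.1 (hS2 he)).2
    set G := T.deleteEdges ↑S with hGdef
    -- separation property
    have key : ∀ x y : X, ¬ G.Reachable x y → c ≤ dist x y := by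
      intro x y hxy
      by_contra hlt
      push_neg at hlt
      have hxyne : x ≠ y := by rintro rfl; exact hxy (Reachable.refl _)
      obtain ⟨p0, hp0, hup⟩ := hT.1.existsUnique_path x y
      have hexe : ∃ e ∈ p0.edges, e ∈ (↑S : Set (Sym2 X)) := by
        by_contra hcon
        push_neg at hcon
        exact hxy ((p0.toDeleteEdges ↑S hcon).reachable)
      obtain ⟨e, hep, heS⟩ := hexe
      rw [Finset.mem_coe] at heS
      have heT : e ∈ T.edgeSet := p0.edges_subset_edgeSet hep
      have hece : c ≤ elen e := hSge e heS
      by_cases heab : e = s(x, y)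
      · subst heab
        rw [elen_mk] at hece
        linarith
      · obtain ⟨u, v, rfl⟩ : ∃ u v, e = s(u,v) := Sym2.ind (fun u v => ⟨u, v, rfl⟩) e
        have huv : T.Adj u v := (mem_edgeSet _).1 heT
        have hTxy : ¬ T.Adj x y := by
          intro hadj
          have h1 := hup (Path.singleton hadj).1 (Path.singleton hadj).2
          rw [← h1] at hep
          simp only [Path.singleton, Walk.edges_cons, Walk.edges_nil, List.mem_singleton] at hep
          exact heab hep
        have hG0xy : ¬ (T.deleteEdges {s(u,v)}).Reachable x y := by
          rintro ⟨w⟩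
          set q : T.Walk x y := w.map (Hom.ofLE (deleteEdges_le _)) with hq
          have h1 := hup (q.toPath).1 (q.toPath).2
          have hep' : s(u,v) ∈ (q.toPath : T.Walk x y).edges := by
            rw [h1]; exact hep
          have hq' : s(u,v) ∈ q.edges := Walk.edges_toPath_subset q hep'
          have hw' : s(u,v) ∈ w.edges := by
            rw [hq] at hq'
            simpa [Walk.edges_map, Hom.ofLE_apply, Sym2.map_id'] using hq'
          have hmem := w.edges_subset_edgeSet hw'
          rw [edgeSet_deleteEdges] at hmem
          exact hmem.2 rfl
        obtain ⟨w0⟩ := hT.1.isConnected.preconnected x y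
        rcases aux_walk_split u v w0 with hr | ⟨hr1, hr2⟩ | ⟨hr1, hr2⟩
        · exact hG0xy hr
        · refine aux_swap hT huv hTxy hxyne hr1 hr2 ?_
          rw [elen_mk] at hece
          linarith
        · refine aux_swap hT huv.symm hTxy hxyne ?_ ?_ ?_
          · rw [Sym2.eq_swap (a := v) (b := u)]
            exact hr1
          · rw [Sym2.eq_swap (a := v) (b := u)]
            exact hr2
          · rw [elen_mk] at hece
            rw [dist_comm v u]
            linarith
    -- component count
    have hGedge : (G.edgeSet.toFinite.toFinset) = F \ S := by
      ext e
      simp only [Set.Finite.mem_toFinset, Finset.mem_sdiff, hGdef, edgeSet_deleteEdges,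
        Set.mem_diff, Finset.mem_coe, hF, Set.Finite.mem_toFinset]
    have hGcard : (G.edgeSet.toFinite.toFinset).card = (m - 1) - (n - 1) := by
      rw [hGedge, Finset.card_sdiff_of_subset hSF, hS3]
      rw [hF] at *
      rw [hedgecard]
    have hcc := aux_card_le_cc_add_edges ((G.edgeSet.toFinite.toFinset).card) G rfl
    rw [hGcard] at hcc
    have hccn : n ≤ Nat.card G.ConnectedComponent := by omega
    have hfinCC : Finite G.ConnectedComponent := Finite.of_surjective _ Quot.mk_surjective
    haveI : Nonempty (Fin n) := ⟨⟨0, by omega⟩⟩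
    obtain ⟨g, hg⟩ := aux_exists_surj (α := G.ConnectedComponent) (β := Fin n)
      (by rw [Fintype.card_fin]; exact hccn)
    have hmksurj : Surjective G.connectedComponentMk := fun c' => Quot.exists_rep c'
    refine ⟨g ∘ G.connectedComponentMk, hg.comp hmksurj, ?_⟩
    apply aux_le_partAlpha hn2
    intro i j hij
    apply aux_le_setDist
    · obtain ⟨x, hx⟩ := (hg.comp hmksurj) i
      exact ⟨x, hx⟩
    · obtain ⟨y, hy⟩ := (hg.comp hmksurj) j
      exact ⟨y, hy⟩
    · intro x hx y hy
      apply key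
      intro hreach
      apply hij
      rw [Set.mem_preimage, Set.mem_singleton_iff] at hx hy
      rw [← hx, ← hy]
      show g (G.connectedComponentMk x) = g (G.connectedComponentMk y)
      rw [ConnectedComponent.eq.2 hreach]
  -- Assembly
  obtain ⟨f0, hf0, hf0c⟩ := hlb
  rw [show alphaN X n = sSup {a | ∃ f : X → Fin n, Surjective f ∧ a = partAlpha f} from rfl]
  set Sa : Set ℝ := {a | ∃ f : X → Fin n, Surjective f ∧ a = partAlpha f} with hSa
  have hSafin : Sa.Finite := by
    have hsub : Sa ⊆ (fun f : X → Fin n => partAlpha f) '' Set.univ := by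
      rintro a ⟨f, _, rfl⟩
      exact ⟨f, trivial, rfl⟩
    exact Set.Finite.subset (Set.toFinite _) hsub
  have hmem : partAlpha f0 ∈ Sa := ⟨f0, hf0, rfl⟩
  have h1 : sSup Sa ≤ c := csSup_le ⟨_, hmem⟩ (by rintro a ⟨f, hf, rfl⟩; exact hub f hf)
  have h2 : c ≤ sSup Sa := le_trans hf0c (le_csSup (Set.Finite.bddAbove hSafin) hmem)
  rw [hcdef] at h1 h2
  exact le_antisymm h1 h2
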